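/- Let b : ℝⁿ → ℝⁿ and σ : ℝⁿ → ℝ^{n×m} be continuously differentiable, set a(x) = σ(x)σ(x)ᵀ and define the Hamiltonian H(x,p) = ⟨b(x), p⟩ + ½⟨p, a(x)p⟩. Suppose φ, θ, μ : [0,T] → ℝⁿ are differentiable and satisfy, for all t ∈ [0,T]: (i) φ̇(t) = b(φ(t)) + a(φ(t))θ(t) (the first Hamilton equation with momentum θ); (ii) −μ̇(t) = ∇ₓH(φ(t), μ(t)) + ½ ∇ₓ(‖σ(x)ᵀ(θ(t) − μ(t))‖²)|_{x=φ(t)} (the adjoint equation including the error term); and (iii) a(φ(t))(θ(t) − μ(t)) = 0 (vanishing of the gradient of the cost in θ). Then for all t: σ(φ(t))ᵀθ(t) = σ(φ(t))ᵀμ(t), the error-term gradient ∇ₓ(‖σ(x)ᵀ(θ(t) − μ(t))‖²)|_{x=φ(t)} is zero, and the pair (φ, μ) solves Hamilton's equations: φ̇ = ∇ₚH(φ, μ) = b(φ) + a(φ)μ and μ̇ = −∇ₓH(φ, μ). -/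

import Mathlib

open Matrix Set
open scoped RealInnerProductSpace

/-- Identify a plain vector in `ℝⁿ` with a point of Euclidean space. -/
noncomputable def toE {n : ℕ} (v : Fin n → ℝ) : EuclideanSpace ℝ (Fin n) :=
  (WithLp.equiv 2 (Fin n → ℝ)).symm v

/-- Identify a point of Euclidean space with a plain vector in `ℝⁿ`. -/
noncomputable def ofE {n : ℕ} (v : EuclideanSpace ℝ (Fin n)) : Fin n → ℝ :=
  WithLp.equiv 2 (Fin n → ℝ) v

/-- Adjoint state method at convergence: if `φ, θ, μ : [0,T] → ℝⁿ` are differentiable and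
satisfy (i) the first Hamilton equation `φ̇ = b(φ) + a(φ)θ` with momentum `θ`, (ii) the adjoint
equation `−μ̇ = ∇ₓH(φ,μ) + ½∇ₓ‖σ(x)ᵀ(θ−μ)‖²|_{x=φ}` including the error term, and (iii) the
vanishing gradient condition `a(φ)(θ − μ) = 0`, where `a = σσᵀ` and
`H(x,p) = ⟨b(x),p⟩ + ½⟨p, a(x)p⟩`, then the noise realised by `θ` equals that realised by `μ`,
the error-term gradient vanishes, and `(φ, μ)` solves Hamilton's equations. -/
theorem adjoint_state_method_converges_to_hamilton {n m : ℕ} (T : ℝ) (hT : 0 < T)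
    (b : EuclideanSpace ℝ (Fin n) → EuclideanSpace ℝ (Fin n))
    (σ : EuclideanSpace ℝ (Fin n) → Fin n → Fin m → ℝ)
    (hb : ContDiff ℝ 1 b) (hσ : ContDiff ℝ 1 σ)
    (a : EuclideanSpace ℝ (Fin n) → Matrix (Fin n) (Fin n) ℝ)
    (ha : ∀ x, a x = Matrix.of (σ x) * (Matrix.of (σ x))ᵀ)
    (H : EuclideanSpace ℝ (Fin n) → EuclideanSpace ℝ (Fin n) → ℝ)
    (hH : ∀ x p, H x p = ⟪b x, p⟫ + (1/2 : ℝ) * ⟪p, toE (a x *ᵥ ofE p)⟫)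
    (φ θ μ : ℝ → EuclideanSpace ℝ (Fin n))
    (hθdiff : ∀ t ∈ Icc 0 T, DifferentiableWithinAt ℝ θ (Icc 0 T) t)
    -- (i) first Hamilton equation with momentum θ
    (hi : ∀ t ∈ Icc 0 T,
      HasDerivWithinAt φ (b (φ t) + toE (a (φ t) *ᵥ ofE (θ t))) (Icc 0 T) t)
    -- (ii) adjoint equation including the error term
    (hii : ∀ t ∈ Icc 0 T,
      HasDerivWithinAt μ
        (-(gradient (fun x => H x (μ t)) (φ t))
          - (1/2 : ℝ) • gradient
              (fun x => ‖toE ((Matrix.of (σ x))ᵀ *ᵥ ofE (θ t - μ t))‖ ^ 2) (φ t))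
        (Icc 0 T) t)
    -- (iii) vanishing of the gradient of the cost in θ
    (hiii : ∀ t ∈ Icc 0 T, a (φ t) *ᵥ ofE (θ t - μ t) = 0) :
    ∀ t ∈ Icc 0 T,
      -- the noise realised by θ coincides with the noise realised by μ
      (Matrix.of (σ (φ t)))ᵀ *ᵥ ofE (θ t) = (Matrix.of (σ (φ t)))ᵀ *ᵥ ofE (μ t) ∧
      -- the error-term gradient is zero
      gradient (fun x => ‖toE ((Matrix.of (σ x))ᵀ *ᵥ ofE (θ t - μ t))‖ ^ 2) (φ t) = 0 ∧
      -- first Hamilton equation for the pair (φ, μ): φ̇ = ∇ₚH(φ,μ) = b(φ) + a(φ)μ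
      gradient (fun p => H (φ t) p) (μ t) = b (φ t) + toE (a (φ t) *ᵥ ofE (μ t)) ∧
      HasDerivWithinAt φ (b (φ t) + toE (a (φ t) *ᵥ ofE (μ t))) (Icc 0 T) t ∧
      -- second Hamilton equation: μ̇ = −∇ₓH(φ,μ)
      HasDerivWithinAt μ (-(gradient (fun x => H x (μ t)) (φ t))) (Icc 0 T) t := by
  
  intro t ht
  have hv := hiii t ht
  -- A = a (φ t) is symmetric
  have hAT : (a (φ t))ᵀ = a (φ t) := by
    rw [ha]; simp [Matrix.transpose_mul]
  -- σᵀ (θ - μ) = 0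
  have hw : (Matrix.of (σ (φ t)))ᵀ *ᵥ ofE (θ t - μ t) = 0 := by
    have h1 : Matrix.of (σ (φ t)) *ᵥ ((Matrix.of (σ (φ t)))ᵀ *ᵥ ofE (θ t - μ t)) = 0 := by
      rw [Matrix.mulVec_mulVec, ← ha]; exact hv
    have h2 : ((Matrix.of (σ (φ t)))ᵀ *ᵥ ofE (θ t - μ t)) ⬝ᵥ
        ((Matrix.of (σ (φ t)))ᵀ *ᵥ ofE (θ t - μ t)) = 0 := by
      rw [Matrix.dotProduct_mulVec, Matrix.vecMul_transpose, h1, zero_dotProduct]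
    exact dotProduct_self_eq_zero.mp h2
  have hofE : ofE (θ t - μ t) = ofE (θ t) - ofE (μ t) := by
    simp [ofE]
  -- noise equality
  have hnoise : (Matrix.of (σ (φ t)))ᵀ *ᵥ ofE (θ t) = (Matrix.of (σ (φ t)))ᵀ *ᵥ ofE (μ t) := by
    have := hw
    rw [hofE, Matrix.mulVec_sub, sub_eq_zero] at this
    exact this
  -- a θ = a μ
  have haeq : a (φ t) *ᵥ ofE (θ t) = a (φ t) *ᵥ ofE (μ t) := by
    have := hv
    rw [hofE, Matrix.mulVec_sub, sub_eq_zero] at this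
    exact this
  -- error-term gradient vanishes
  have hgrad0 : gradient
      (fun x => ‖toE ((Matrix.of (σ x))ᵀ *ᵥ ofE (θ t - μ t))‖ ^ 2) (φ t) = 0 := by
    have hmin : IsLocalMin
        (fun x => ‖toE ((Matrix.of (σ x))ᵀ *ᵥ ofE (θ t - μ t))‖ ^ 2) (φ t) :=
      Filter.Eventually.of_forall fun y => by
        have h0 : ‖toE ((Matrix.of (σ (φ t)))ᵀ *ᵥ ofE (θ t - μ t))‖ ^ 2 = 0 := by
          rw [hw]; simp [toE]
        simp only
        rw [h0]; positivity
    have hfd := hmin.fderiv_eq_zero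
    rw [gradient, hfd, map_zero]
  refine ⟨hnoise, hgrad0, ?_, ?_, ?_⟩
  · -- gradient of H in p
    -- linear map p ↦ toE (a (φ t) *ᵥ ofE p)
    set A := a (φ t) with hA
    have hAadd : ∀ p q : EuclideanSpace ℝ (Fin n),
        toE (A *ᵥ ofE (p + q)) = toE (A *ᵥ ofE p) + toE (A *ᵥ ofE q) := by
      intro p q; simp [toE, ofE, Matrix.mulVec_add]
    have hAsmul : ∀ (c : ℝ) (p : EuclideanSpace ℝ (Fin n)),
        toE (A *ᵥ ofE (c • p)) = c • toE (A *ᵥ ofE p) := by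
      intro c p; simp [toE, ofE, Matrix.mulVec_smul]
    let Llin : EuclideanSpace ℝ (Fin n) →ₗ[ℝ] EuclideanSpace ℝ (Fin n) :=
      { toFun := fun p => toE (A *ᵥ ofE p)
        map_add' := hAadd
        map_smul' := hAsmul }
    let L : EuclideanSpace ℝ (Fin n) →L[ℝ] EuclideanSpace ℝ (Fin n) :=
      LinearMap.toContinuousLinearMap Llin
    have hLapp : ∀ p, L p = toE (A *ᵥ ofE p) := fun p => rfl
    -- inner product as dot product
    have hinner : ∀ u w : EuclideanSpace ℝ (Fin n), ⟪u, w⟫ = ofE u ⬝ᵥ ofE w := by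
      intro u w
      simp [PiLp.inner_apply, ofE, dotProduct, mul_comm]
    have hofE_toE : ∀ v : Fin n → ℝ, ofE (toE v) = v := fun v => rfl
    -- symmetry of L
    have hsym : ∀ u w : EuclideanSpace ℝ (Fin n), ⟪u, L w⟫ = ⟪L u, w⟫ := by
      intro u w
      rw [hinner, hinner, hLapp, hLapp, hofE_toE, hofE_toE,
        Matrix.dotProduct_mulVec, ← Matrix.mulVec_transpose, hAT]
    have key : HasGradientAt (fun p => H (φ t) p)
        (b (φ t) + toE (A *ᵥ ofE (μ t))) (μ t) := by
      rw [hasGradientAt_iff_hasFDerivAt]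
      have hf1 : HasFDerivAt (fun p : EuclideanSpace ℝ (Fin n) => ⟪b (φ t), p⟫)
          (innerSL ℝ (b (φ t))) (μ t) := (innerSL ℝ (b (φ t))).hasFDerivAt
      have hf2 : HasFDerivAt (fun p : EuclideanSpace ℝ (Fin n) => ⟪p, L p⟫)
          ((fderivInnerCLM ℝ (μ t, L (μ t))).comp
            ((ContinuousLinearMap.id ℝ _).prod L)) (μ t) :=
        (hasFDerivAt_id (μ t)).inner ℝ L.hasFDerivAt
      have hsum := hf1.add (hf2.const_mul (1/2 : ℝ))
      have heq : (fun p : EuclideanSpace ℝ (Fin n) => H (φ t) p) =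
          fun p => ⟪b (φ t), p⟫ + (1/2 : ℝ) * ⟪p, L p⟫ := by
        funext p; rw [hH, hLapp]
      rw [heq]
      refine HasFDerivAt.congr_fderiv hsum ?_
      ext w
      simp only [ContinuousLinearMap.add_apply, ContinuousLinearMap.coe_comp',
        Function.comp_apply, ContinuousLinearMap.prod_apply,
        ContinuousLinearMap.coe_id', id_eq, ContinuousLinearMap.coe_smul',
        Pi.smul_apply, fderivInnerCLM_apply, innerSL_apply_apply, smul_eq_mul,
        InnerProductSpace.toDual_apply_apply]
      rw [inner_add_left, hsym (μ t) w, ← hLapp, real_inner_comm w (L (μ t))]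
      ring
    exact key.gradient
  · -- first Hamilton equation with μ
    have := hi t ht
    rwa [haeq] at this
  · -- second Hamilton equation
    have := hii t ht
    rwa [hgrad0, smul_zero, sub_zero] at this
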